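/- Let λ = (1+√5)/2 and let v be the column vector v = (1/(6λ+4))·(λ+1, λ, 1, λ, λ, 1, λ, λ+1)ᵀ. Then M_A·v = λ·v and M_H·v = λ·v, the entries of v sum to 1, and every complex eigenvalue z of M_A, as well as every complex eigenvalue z of M_H, satisfies |z| ≤ λ (so λ is the spectral radius of both matrices). -/

import Mathlib

lemma spectral_bound {n : ℕ} (M : Matrix (Fin n) (Fin n) ℂ) (u : Fin n → ℝ) (l : ℝ)
    (hu : ∀ i, 0 < u i)
    (hM : ∀ j, ∑ i, u i * ‖M i j‖ ≤ l * u j) :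
    ∀ z ∈ spectrum ℂ M, ‖z‖ ≤ l := by
  intro z hz
  rw [← AlgEquiv.spectrum_eq Matrix.toLinAlgEquiv' M] at hz
  obtain ⟨x, hx⟩ :=
    (Module.End.hasEigenvalue_iff_mem_spectrum.2 hz).exists_hasEigenvector
  have hx0 : x ≠ 0 := hx.right
  have hmul : M.mulVec x = z • x := by
    have := hx.apply_eq_smul
    rw [← Matrix.toLin'_apply M x]
    simpa [Matrix.toLinAlgEquiv'_apply] using this
  set y : Fin n → ℝ := fun i => ‖x i‖ with hy
  have key : ∀ i, ‖z‖ * y i ≤ ∑ j, ‖M i j‖ * y j := by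
    intro i
    have h1 : z * x i = ∑ j, M i j * x j := by
      have := congrFun hmul i
      simpa [Matrix.mulVec, dotProduct, eq_comm] using this
    calc ‖z‖ * y i = ‖∑ j, M i j * x j‖ := by
          rw [← h1]; simp [hy]
      _ ≤ ∑ j, ‖M i j * x j‖ := by
          simpa using norm_sum_le Finset.univ (fun j => M i j * x j)
      _ = ∑ j, ‖M i j‖ * y j := by simp [hy]
  have hS : 0 < ∑ i, u i * y i := by
    obtain ⟨i, hi⟩ : ∃ i, x i ≠ 0 := Function.ne_iff.1 hx0
    apply Finset.sum_pos'
    · intro j _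
      exact mul_nonneg (hu j).le (norm_nonneg _)
    · exact ⟨i, Finset.mem_univ i, mul_pos (hu i) (by simpa [hy] using hi)⟩
  have main : ‖z‖ * ∑ i, u i * y i ≤ l * ∑ i, u i * y i := by
    calc ‖z‖ * ∑ i, u i * y i = ∑ i, u i * (‖z‖ * y i) := by
          rw [Finset.mul_sum]; congr 1; ext i; ring
      _ ≤ ∑ i, u i * ∑ j, ‖M i j‖ * y j := by
          apply Finset.sum_le_sum
          intro i _
          exact mul_le_mul_of_nonneg_left (key i) (hu i).le
      _ = ∑ j, (∑ i, u i * ‖M i j‖) * y j := by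
          simp_rw [Finset.mul_sum, Finset.sum_mul]
          rw [Finset.sum_comm]
          congr 1; ext i; congr 1; ext j; ring
      _ ≤ ∑ j, (l * u j) * y j := by
          apply Finset.sum_le_sum
          intro j _
          exact mul_le_mul_of_nonneg_right (hM j) (norm_nonneg _)
      _ = l * ∑ j, u j * y j := by
          rw [Finset.mul_sum]; congr 1; ext j; ring
  exact le_of_mul_le_mul_right main hS



/-- The Artin transition matrix `M_A`, as a real matrix. -/
def MA : Matrix (Fin 8) (Fin 8) ℝ :=
  !![1,1,0,0,0,0,0,0;
     0,0,1,1,0,0,0,0;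
     0,0,0,0,0,0,1,0;
     0,0,0,0,0,0,0,1;
     1,0,0,0,0,0,0,0;
     0,1,0,0,0,0,0,0;
     0,0,0,0,1,1,0,0;
     0,0,0,0,0,0,1,1]

/-- The Hurwitz transition matrix `M_H`, as a real matrix. -/
def MH : Matrix (Fin 8) (Fin 8) ℝ :=
  !![1,1,0,0,0,0,0,0;
     0,0,1,1,0,0,0,0;
     0,0,0,0,1,0,0,0;
     0,0,0,0,0,0,0,1;
     1,0,0,0,0,0,0,0;
     0,0,0,1,0,0,0,0;
     0,0,0,0,1,1,0,0;
     0,0,0,0,0,0,1,1]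

/-- The Artin transition matrix `M_A`, as a complex matrix. -/
def MAC : Matrix (Fin 8) (Fin 8) ℂ :=
  !![1,1,0,0,0,0,0,0;
     0,0,1,1,0,0,0,0;
     0,0,0,0,0,0,1,0;
     0,0,0,0,0,0,0,1;
     1,0,0,0,0,0,0,0;
     0,1,0,0,0,0,0,0;
     0,0,0,0,1,1,0,0;
     0,0,0,0,0,0,1,1]

/-- The Hurwitz transition matrix `M_H`, as a complex matrix. -/
def MHC : Matrix (Fin 8) (Fin 8) ℂ :=
  !![1,1,0,0,0,0,0,0;
     0,0,1,1,0,0,0,0;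
     0,0,0,0,1,0,0,0;
     0,0,0,0,0,0,0,1;
     1,0,0,0,0,0,0,0;
     0,0,0,1,0,0,0,0;
     0,0,0,0,1,1,0,0;
     0,0,0,0,0,0,1,1]

/-- The golden ratio `λ = (1+√5)/2`. -/
noncomputable def lam : ℝ := (1 + Real.sqrt 5) / 2

/-- The common probability eigenvector `v` of `M_A` and `M_H`. -/
noncomputable def v : Fin 8 → ℝ :=
  (6 * lam + 4)⁻¹ • ![lam + 1, lam, 1, lam, lam, 1, lam, lam + 1]


lemma cons_val_five {α} {m : ℕ} (x : α) (u : Fin (m+5) → α) :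
    Matrix.vecCons x u 5 = Matrix.vecHead (Matrix.vecTail (Matrix.vecTail (Matrix.vecTail (Matrix.vecTail u)))) := rfl
lemma cons_val_six {α} {m : ℕ} (x : α) (u : Fin (m+6) → α) :
    Matrix.vecCons x u 6 = Matrix.vecHead (Matrix.vecTail (Matrix.vecTail (Matrix.vecTail (Matrix.vecTail (Matrix.vecTail u))))) := rfl
lemma cons_val_seven {α} {m : ℕ} (x : α) (u : Fin (m+7) → α) :
    Matrix.vecCons x u 7 = Matrix.vecHead (Matrix.vecTail (Matrix.vecTail (Matrix.vecTail (Matrix.vecTail (Matrix.vecTail (Matrix.vecTail u)))))) := rfl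

lemma lam_sq : lam * lam = lam + 1 := by
  have h : Real.sqrt 5 * Real.sqrt 5 = 5 := Real.mul_self_sqrt (by norm_num)
  unfold lam; nlinarith [h]

lemma lam_pos : 0 < lam := by
  have := Real.sqrt_nonneg 5
  unfold lam; linarith

lemma c_ne : (6 * lam + 4 : ℝ) ≠ 0 := by nlinarith [lam_pos]

set_option maxHeartbeats 1000000

/-- `v` is a probability eigenvector of both `M_A` and `M_H` with eigenvalue `λ = (1+√5)/2`,
and every complex eigenvalue `z` of `M_A` or of `M_H` satisfies `|z| ≤ λ`
(so `λ` is the spectral radius of both matrices). -/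
theorem golden_eigenvector_and_spectral_radius :
    MA.mulVec v = lam • v ∧ MH.mulVec v = lam • v ∧ (∑ i, v i) = 1 ∧
    (∀ z ∈ spectrum ℂ MAC, ‖z‖ ≤ lam) ∧
    (∀ z ∈ spectrum ℂ MHC, ‖z‖ ≤ lam) := by
  have hsq := lam_sq
  have hp := lam_pos
  have hc := c_ne
  refine ⟨?_, ?_, ?_, ?_, ?_⟩
  · funext i
    fin_cases i <;>
      simp [MA, v, Matrix.mulVec, dotProduct, Fin.sum_univ_eight, cons_val_five, cons_val_six, cons_val_seven, Matrix.vecHead, Matrix.vecTail] <;>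
      field_simp <;> nlinarith [hsq, hp]
  · funext i
    fin_cases i <;>
      simp [MH, v, Matrix.mulVec, dotProduct, Fin.sum_univ_eight, cons_val_five, cons_val_six, cons_val_seven, Matrix.vecHead, Matrix.vecTail] <;>
      field_simp <;> nlinarith [hsq, hp]
  · simp [v, Fin.sum_univ_eight, cons_val_five, cons_val_six, cons_val_seven, Matrix.vecHead, Matrix.vecTail]
    field_simp
    ring
  · apply spectral_bound MAC ![lam, lam, 1, 1, 1, 1, lam, lam] lam
    · intro i; fin_cases i <;> simp [cons_val_five, cons_val_six, cons_val_seven, Matrix.vecHead, Matrix.vecTail] <;> nlinarith [hp]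
    · intro j
      fin_cases j <;>
        simp [MAC, Fin.sum_univ_eight, cons_val_five, cons_val_six, cons_val_seven, Matrix.vecHead, Matrix.vecTail] <;> nlinarith [hsq, hp]
  · apply spectral_bound MHC ![lam + 1, lam, 1, lam, lam, 1, lam, lam + 1] lam
    · intro i; fin_cases i <;> simp [cons_val_five, cons_val_six, cons_val_seven, Matrix.vecHead, Matrix.vecTail] <;> nlinarith [hp]
    · intro j
      fin_cases j <;>
        simp [MHC, Fin.sum_univ_eight, cons_val_five, cons_val_six, cons_val_seven, Matrix.vecHead, Matrix.vecTail] <;> nlinarith [hsq, hp]
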